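/- Let Ω ⊆ ℝ³ be open, ε > 0 and u ∈ C²(Ω), and let ξ := (ε/2)|∇u|² − W(u)/ε (so ∇ξ = ε(∇²u)∇u − (W′(u)/ε)∇u). Then ∫_Ω |∇ξ| dx ≤ 3^{1/4} · ( (1/ε) ∫_Ω | ε∇²u − (W′(u)/ε) ν_u ⊗ ν_u |² dx )^{1/2} · ( ∫_Ω ε|∇u|² dx )^{1/2}, whenever the two integrals on the right-hand side are finite. -/

import Mathlib

open MeasureTheory

/-- The double-well potential `W(s) = (1 − s²)²/4`. -/
noncomputable def W (s : ℝ) : ℝ := (1 - s ^ 2) ^ 2 / 4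

/-- Its derivative `W′(s) = −s(1 − s²)`. -/
noncomputable def W' (s : ℝ) : ℝ := -s * (1 - s ^ 2)

/-- `i`-th partial derivative of a function on `ℝ³`. -/
noncomputable def pd (u : (Fin 3 → ℝ) → ℝ) (i : Fin 3) (x : Fin 3 → ℝ) : ℝ :=
  fderiv ℝ u x (Pi.single i 1)

/-- Hessian entry `∂_i ∂_j u`. -/
noncomputable def hess (u : (Fin 3 → ℝ) → ℝ) (i j : Fin 3) (x : Fin 3 → ℝ) : ℝ :=
  pd (pd u j) i x

/-- The unit vector field `ν_u = ∇u/|∇u|` on `{∇u ≠ 0}`, equal to `e₃` on `{∇u = 0}`. -/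
noncomputable def nu (u : (Fin 3 → ℝ) → ℝ) (x : Fin 3 → ℝ) : Fin 3 → ℝ :=
  if (∑ i, (pd u i x) ^ 2) = 0 then (fun i => if i = 2 then 1 else 0)
  else fun i => pd u i x / Real.sqrt (∑ j, (pd u j x) ^ 2)

/-- The discrepancy density `ξ = (ε/2)|∇u|² − W(u)/ε`. -/
noncomputable def xi (ε : ℝ) (u : (Fin 3 → ℝ) → ℝ) (x : Fin 3 → ℝ) : ℝ :=
  ε / 2 * (∑ i, (pd u i x) ^ 2) - W (u x) / ε

lemma hasDerivAt_W (s : ℝ) : HasDerivAt W (W' s) s := by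
  have h1 : HasDerivAt (fun t : ℝ => 1 - t ^ 2) (-(2 * s ^ 1)) s := by
    simpa using ((hasDerivAt_pow 2 s).const_sub 1)
  have h3 := (h1.pow 2).div_const 4
  refine h3.congr_deriv ?_
  simp [W']; ring

lemma pd_xi_eq {Ω : Set (Fin 3 → ℝ)} (hΩ : IsOpen Ω) {u : (Fin 3 → ℝ) → ℝ}
    (hu : ContDiffOn ℝ 2 u Ω) (ε : ℝ) {x : Fin 3 → ℝ} (hx : x ∈ Ω) (i : Fin 3) :
    pd (xi ε u) i x = ε * (∑ j, pd u j x * hess u i j x) - W' (u x) / ε * pd u i x := by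
  have hC : ContDiffAt ℝ 2 u x := hu.contDiffAt (hΩ.mem_nhds hx)
  have hdu : DifferentiableAt ℝ u x := hC.differentiableAt (by norm_num)
  have hf : ContDiffAt ℝ 1 (fderiv ℝ u) x := hC.fderiv_right (by norm_num)
  have hpd : ∀ j : Fin 3, HasFDerivAt (pd u j) (fderiv ℝ (pd u j) x) x := by
    intro j
    have h : DifferentiableAt ℝ (pd u j) x :=
      (ContinuousLinearMap.apply ℝ ℝ (Pi.single j 1 : Fin 3 → ℝ)).differentiableAt.comp x
        (hf.differentiableAt (by norm_num))
    exact h.hasFDerivAt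
  have hsq : ∀ j : Fin 3, HasFDerivAt (fun y => (pd u j y) ^ 2)
      ((2 * pd u j x) • fderiv ℝ (pd u j) x) x := by
    intro j
    have h := (hpd j).mul (hpd j)
    rw [two_mul, add_smul]
    simp only [pow_two]
    exact h
  have hsum := HasFDerivAt.fun_sum (fun j (_ : j ∈ Finset.univ) => hsq j)
  have hWu : HasFDerivAt (fun y => W (u y)) (W' (u x) • fderiv ℝ u x) x :=
    (hasDerivAt_W (u x)).comp_hasFDerivAt x hdu.hasFDerivAt
  have hxi : HasFDerivAt (xi ε u)
      ((ε / 2) • (∑ j : Fin 3, (2 * pd u j x) • fderiv ℝ (pd u j) x)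
        - ε⁻¹ • (W' (u x) • fderiv ℝ u x)) x := by
    have h := (hsum.const_mul (ε / 2)).sub (hWu.const_mul ε⁻¹)
    have hfun : xi ε u = fun y => ε / 2 * (∑ j : Fin 3, pd u j y ^ 2) - ε⁻¹ * W (u y) := by
      funext y; simp [xi, div_eq_inv_mul]
    rw [hfun]; exact h
  rw [show pd (xi ε u) i x = fderiv ℝ (xi ε u) x (Pi.single i 1) from rfl, hxi.fderiv]
  have hh : ∀ j, fderiv ℝ (pd u j) x (Pi.single i 1) = hess u i j x := fun j => rfl
  have hp : fderiv ℝ u x (Pi.single i 1) = pd u i x := rfl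
  simp only [ContinuousLinearMap.sub_apply, ContinuousLinearMap.smul_apply,
    ContinuousLinearMap.sum_apply, hh, hp, smul_eq_mul, Finset.mul_sum]
  congr 1
  · exact Finset.sum_congr rfl fun j _ => by ring
  · ring

lemma pointwise_bound {Ω : Set (Fin 3 → ℝ)} (hΩ : IsOpen Ω) {u : (Fin 3 → ℝ) → ℝ}
    (hu : ContDiffOn ℝ 2 u Ω) (ε : ℝ) {x : Fin 3 → ℝ} (hx : x ∈ Ω) :
    Real.sqrt (∑ i, (pd (xi ε u) i x) ^ 2)
      ≤ Real.sqrt (∑ i, ∑ j, (ε * hess u i j x - (W' (u x) / ε) * nu u x i * nu u x j) ^ 2)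
        * Real.sqrt (∑ i, (pd u i x) ^ 2) := by
  set c := W' (u x) / ε with hc
  have key : ∀ i, pd (xi ε u) i x
      = ∑ j, (ε * hess u i j x - c * nu u x i * nu u x j) * pd u j x := by
    intro i
    rw [pd_xi_eq hΩ hu ε hx i]
    by_cases hS : (∑ j, (pd u j x) ^ 2) = 0
    · have hg : ∀ j : Fin 3, pd u j x = 0 := by
        intro j
        have h0 := (Finset.sum_eq_zero_iff_of_nonneg
          (fun k _ => sq_nonneg (pd u k x))).1 hS j (Finset.mem_univ j)
        exact pow_eq_zero_iff (by norm_num) |>.1 h0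
      simp [hg]
    · have hS0 : 0 < ∑ j, (pd u j x) ^ 2 :=
        lt_of_le_of_ne (Finset.sum_nonneg fun k _ => sq_nonneg _) (Ne.symm hS)
      have hnu : nu u x = fun j => pd u j x / Real.sqrt (∑ k, (pd u k x) ^ 2) := by
        simp only [nu, if_neg hS]
      set t := Real.sqrt (∑ k, (pd u k x) ^ 2) with ht
      have ht2 : t ^ 2 = ∑ k, (pd u k x) ^ 2 := Real.sq_sqrt hS0.le
      have htne : t ≠ 0 := (Real.sqrt_pos.2 hS0).ne'
      rw [hnu]
      have e2 : ∑ j, (ε * hess u i j x - c * (pd u i x / t) * (pd u j x / t)) * pd u j x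
          = ε * (∑ j, pd u j x * hess u i j x)
            - (c * pd u i x / t ^ 2) * ∑ j, (pd u j x) ^ 2 := by
        rw [Finset.mul_sum, Finset.mul_sum, ← Finset.sum_sub_distrib]
        exact Finset.sum_congr rfl fun j _ => by field_simp
      rw [e2, ← ht2]
      rw [div_mul_cancel₀ _ (pow_ne_zero 2 htne)]
  have hcs : (∑ i, (pd (xi ε u) i x) ^ 2)
      ≤ (∑ i, ∑ j, (ε * hess u i j x - c * nu u x i * nu u x j) ^ 2)
        * (∑ j, (pd u j x) ^ 2) := by
    rw [Finset.sum_mul]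
    refine Finset.sum_le_sum fun i _ => ?_
    rw [key i]
    exact Finset.sum_mul_sq_le_sq_mul_sq _ _ _
  calc Real.sqrt (∑ i, (pd (xi ε u) i x) ^ 2) ≤ _ := Real.sqrt_le_sqrt hcs
    _ = _ := Real.sqrt_mul (Finset.sum_nonneg fun i _ =>
        Finset.sum_nonneg fun j _ => sq_nonneg _) _

/-- `∫_Ω |∇ξ| dx ≤ 3^{1/4} · ((1/ε)∫_Ω |ε∇²u − (W′(u)/ε) ν_u⊗ν_u|² dx)^{1/2}
· (∫_Ω ε|∇u|² dx)^{1/2}`, whenever the two integrals on the right are finite. -/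
theorem stmt_11 (Ω : Set (Fin 3 → ℝ)) (hΩ : IsOpen Ω)
    (u : (Fin 3 → ℝ) → ℝ) (hu : ContDiffOn ℝ 2 u Ω) (ε : ℝ) (hε : 0 < ε)
    (h₁ : IntegrableOn
      (fun x => ∑ i, ∑ j,
        (ε * hess u i j x - (W' (u x) / ε) * nu u x i * nu u x j) ^ 2) Ω volume)
    (h₂ : IntegrableOn (fun x => ε * ∑ i, (pd u i x) ^ 2) Ω volume) :
    (∫ x in Ω, Real.sqrt (∑ i, (pd (xi ε u) i x) ^ 2))
      ≤ (3:ℝ) ^ ((1:ℝ)/4)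
        * Real.sqrt ((1/ε) * ∫ x in Ω, ∑ i, ∑ j,
            (ε * hess u i j x - (W' (u x) / ε) * nu u x i * nu u x j) ^ 2)
        * Real.sqrt (∫ x in Ω, ε * ∑ i, (pd u i x) ^ 2) := by
  set μ := volume.restrict Ω with hμ
  set F : (Fin 3 → ℝ) → ℝ := fun x => ∑ i, ∑ j,
    (ε * hess u i j x - (W' (u x) / ε) * nu u x i * nu u x j) ^ 2 with hFdef
  set G : (Fin 3 → ℝ) → ℝ := fun x => ∑ i, (pd u i x) ^ 2 with hGdef
  have hFnn : ∀ x, 0 ≤ F x := fun x =>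
    Finset.sum_nonneg fun i _ => Finset.sum_nonneg fun j _ => sq_nonneg _
  have hGnn : ∀ x, 0 ≤ G x := fun x => Finset.sum_nonneg fun i _ => sq_nonneg _
  have hF : Integrable F μ := h₁
  have hG : Integrable G μ := by
    have h := h₂.const_mul ε⁻¹
    refine h.congr (Filter.Eventually.of_forall fun x => ?_)
    field_simp
    rfl
  have asmF : AEStronglyMeasurable (fun x => Real.sqrt (F x)) μ :=
    Real.continuous_sqrt.comp_aestronglyMeasurable hF.1
  have asmG : AEStronglyMeasurable (fun x => Real.sqrt (G x)) μ :=
    Real.continuous_sqrt.comp_aestronglyMeasurable hG.1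
  have hprod : Integrable (fun x => Real.sqrt (F x) * Real.sqrt (G x)) μ := by
    refine Integrable.mono' ((hF.add hG).div_const 2) (asmF.mul asmG)
      (Filter.Eventually.of_forall fun x => ?_)
    rw [Real.norm_of_nonneg (mul_nonneg (Real.sqrt_nonneg _) (Real.sqrt_nonneg _))]
    simp only [Pi.add_apply]
    nlinarith [Real.sq_sqrt (hFnn x), Real.sq_sqrt (hGnn x),
      sq_nonneg (Real.sqrt (F x) - Real.sqrt (G x)), Real.sqrt_nonneg (F x),
      Real.sqrt_nonneg (G x)]
  have step1 : (∫ x in Ω, Real.sqrt (∑ i, (pd (xi ε u) i x) ^ 2))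
      ≤ ∫ x, Real.sqrt (F x) * Real.sqrt (G x) ∂μ := by
    refine integral_mono_of_nonneg
      (Filter.Eventually.of_forall fun x => Real.sqrt_nonneg _) hprod ?_
    exact ae_restrict_of_forall_mem hΩ.measurableSet fun x hx => pointwise_bound hΩ hu ε hx
  have hconj : Real.HolderConjugate 2 2 := ⟨by norm_num, by norm_num, by norm_num⟩
  have h2e : (ENNReal.ofReal 2) = 2 := by norm_num
  have sqF : ∀ x, Real.sqrt (F x) ^ (2:ℝ) = F x := fun x => by
    rw [show (2:ℝ) = ((2:ℕ):ℝ) by norm_num, Real.rpow_natCast, Real.sq_sqrt (hFnn x)]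
  have sqG : ∀ x, Real.sqrt (G x) ^ (2:ℝ) = G x := fun x => by
    rw [show (2:ℝ) = ((2:ℕ):ℝ) by norm_num, Real.rpow_natCast, Real.sq_sqrt (hGnn x)]
  have memF : MemLp (fun x => Real.sqrt (F x)) (ENNReal.ofReal 2) μ := by
    rw [h2e]
    exact (memLp_two_iff_integrable_sq asmF).2
      (hF.congr (Filter.Eventually.of_forall fun x => (Real.sq_sqrt (hFnn x)).symm))
  have memG : MemLp (fun x => Real.sqrt (G x)) (ENNReal.ofReal 2) μ := by
    rw [h2e]
    exact (memLp_two_iff_integrable_sq asmG).2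
      (hG.congr (Filter.Eventually.of_forall fun x => (Real.sq_sqrt (hGnn x)).symm))
  have step2 : (∫ x, Real.sqrt (F x) * Real.sqrt (G x) ∂μ)
      ≤ Real.sqrt (∫ x, F x ∂μ) * Real.sqrt (∫ x, G x ∂μ) := by
    have h := integral_mul_le_Lp_mul_Lq_of_nonneg hconj
      (Filter.Eventually.of_forall fun x => Real.sqrt_nonneg (F x))
      (Filter.Eventually.of_forall fun x => Real.sqrt_nonneg (G x)) memF memG
    simp only [sqF, sqG] at h
    rw [Real.sqrt_eq_rpow, Real.sqrt_eq_rpow]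
    exact h
  have hiG : (∫ x, G x ∂μ) = (1/ε) * ∫ x, ε * G x ∂μ := by
    rw [integral_const_mul]
    field_simp
  have hInn : 0 ≤ (1/ε) * ∫ x, F x ∂μ :=
    mul_nonneg (by positivity) (integral_nonneg hFnn)
  have hεGnn : 0 ≤ ∫ x, ε * G x ∂μ :=
    integral_nonneg fun x => mul_nonneg hε.le (hGnn x)
  have step3 : Real.sqrt (∫ x, F x ∂μ) * Real.sqrt (∫ x, G x ∂μ)
      = Real.sqrt ((1/ε) * ∫ x, F x ∂μ) * Real.sqrt (∫ x, ε * G x ∂μ) := by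
    rw [← Real.sqrt_mul (integral_nonneg hFnn), ← Real.sqrt_mul hInn, hiG]
    congr 1
    ring
  have h34 : (1:ℝ) ≤ (3:ℝ) ^ ((1:ℝ)/4) := by
    have := Real.rpow_le_rpow (by norm_num : (0:ℝ) ≤ 1) (by norm_num : (1:ℝ) ≤ 3)
      (by norm_num : (0:ℝ) ≤ 1/4)
    simpa using this
  calc (∫ x in Ω, Real.sqrt (∑ i, (pd (xi ε u) i x) ^ 2))
      ≤ ∫ x, Real.sqrt (F x) * Real.sqrt (G x) ∂μ := step1
    _ ≤ Real.sqrt (∫ x, F x ∂μ) * Real.sqrt (∫ x, G x ∂μ) := step2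
    _ = Real.sqrt ((1/ε) * ∫ x, F x ∂μ) * Real.sqrt (∫ x, ε * G x ∂μ) := step3
    _ ≤ (3:ℝ) ^ ((1:ℝ)/4) * Real.sqrt ((1/ε) * ∫ x, F x ∂μ)
        * Real.sqrt (∫ x, ε * G x ∂μ) := by
        rw [mul_assoc]
        exact le_mul_of_one_le_left
          (mul_nonneg (Real.sqrt_nonneg _) (Real.sqrt_nonneg _)) h34
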